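/- arXiv:math/0703102 — 2 statements merged into one kernel-verified Lean document; each statement's English description precedes it below -/
import Mathlib

section
/- Let σ ∈ S_n with Mc σ = d₁d₂⋯d_n. If d₁ ≤ d₂ ≤ ⋯ ≤ d_k for some 1 ≤ k ≤ n, then every maximal factor of σ all of whose letters are ≤ k is increasing. -/
/-- Descent set (ligne of route) of a word, with 1-based positions. -/
def ligne (w : List ℕ) : Finset ℕ :=
  (Finset.Icc 1 (w.length - 1)).filter (fun i => w.getD (i-1) 0 > w.getD i 0)

/-- Major index of a word. -/
def maj (w : List ℕ) : ℕ := ∑ i ∈ ligne w, i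

/-- Inversion number of a word. -/
def inv (w : List ℕ) : ℕ :=
  ((Finset.range w.length ×ˢ Finset.range w.length).filter
    (fun p => p.1 < p.2 ∧ w.getD p.1 0 > w.getD p.2 0)).card

/-- `w` is (the one-line word of) a permutation of `1,…,n`. -/
def IsPermWord (n : ℕ) (w : List ℕ) : Prop := w.Perm (List.range' 1 n)

/-- One-line word of `σ ∈ S_n` with values in `1,…,n`. -/
def toWord {n : ℕ} (σ : Equiv.Perm (Fin n)) : List ℕ := List.ofFn (fun i => (σ i : ℕ) + 1)

/-- Subexcedent word: `0 ≤ d_i ≤ i-1` (1-based), i.e. `d_i ≤ i` for 0-based `i`. -/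
def Subexcedent (w : List ℕ) : Prop := ∀ i < w.length, w.getD i 0 ≤ i

/-- Subdiagonal word: `0 ≤ d_i ≤ n-i` (1-based). -/
def Subdiagonal (w : List ℕ) : Prop := ∀ i < w.length, w.getD i 0 + i + 1 ≤ w.length

/-- Lehmer code: `d_i = #{j < i : x_j > x_i}`. -/
def invcode (w : List ℕ) : List ℕ :=
  (List.range w.length).map (fun i => ((Finset.range i).filter (fun j => w.getD j 0 > w.getD i 0)).card)

/-- `Lc`-code: `d_i = #{j > i : x_i > x_j}`. -/
def lc (w : List ℕ) : List ℕ :=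
  (List.range w.length).map (fun i => ((Finset.Ico (i+1) w.length).filter (fun j => w.getD i 0 > w.getD j 0)).card)

/-- Major index code: `d_i = maj(σ|_i) - maj(σ|_{i-1})`, where `σ|_i` erases letters `> i`. -/
def majcode (w : List ℕ) : List ℕ :=
  (List.range w.length).map (fun i => maj (w.filter (· ≤ i+1)) - maj (w.filter (· ≤ i)))

/-- `Mc`-code: `d_i = maj(σ^{(i)}) - maj(σ^{(i+1)})`, where `σ^{(i)}` erases letters `< i`. -/
def mc (w : List ℕ) : List ℕ :=
  (List.range w.length).map (fun i => maj (w.filter (fun x => i+1 ≤ x)) - maj (w.filter (fun x => i+2 ≤ x)))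

/-- One-line word of the inverse permutation. -/
def invWord (w : List ℕ) : List ℕ :=
  (List.range w.length).map (fun i => w.idxOf (i+1) + 1)

/-- `Ic σ = Lc (σ⁻¹)`. -/
def ic (w : List ℕ) : List ℕ := lc (invWord w)

/-- Inverse ligne of route. -/
def iligne (w : List ℕ) : Finset ℕ := ligne (invWord w)

/-- Complement map `δ` on codes: `δ(d₁⋯d_n) = (0-d₁)(1-d₂)⋯(n-1-d_n)`. -/
def deltaC (w : List ℕ) : List ℕ :=
  (List.range w.length).map (fun i => i - w.getD i 0)

/-- Nondecreasing rearrangement of a word. -/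
def sortW (w : List ℕ) : List ℕ := List.insertionSort (· ≤ ·) w

/-- Set-valued statistic `El = Ligne ∘ Mc⁻¹` on subdiagonal words. -/
noncomputable def El (d : List ℕ) : Finset ℕ := by
  classical
  exact if h : ∃ w, IsPermWord d.length w ∧ mc w = d then ligne h.choose else ∅

/-- Set-valued statistic `Eul = Ligne ∘ Majcode⁻¹` on subexcedent words. -/
noncomputable def Eul (d : List ℕ) : Finset ℕ := by
  classical
  exact if h : ∃ w, IsPermWord d.length w ∧ majcode w = d then ligne h.choose else ∅


def des (w : List ℕ) : ℕ := (ligne w).card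

def dh (z : ℕ) (w : List ℕ) : ℕ := if 0 < w.length ∧ w.getD 0 0 < z then 1 else 0

lemma mem_ligne {w : List ℕ} {i : ℕ} :
    i ∈ ligne w ↔ 1 ≤ i ∧ i ≤ w.length - 1 ∧ w.getD i 0 < w.getD (i-1) 0 := by
  simp [ligne, Finset.mem_filter, Finset.mem_Icc, and_assoc, gt_iff_lt]

lemma ligne_cons (z : ℕ) (w : List ℕ) :
    ligne (z :: w) = ((ligne w).image (· + 1)) ∪
      (if 0 < w.length ∧ w.getD 0 0 < z then {1} else ∅) := by
  ext i
  rw [mem_ligne, Finset.mem_union, Finset.mem_image]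
  constructor
  · rintro ⟨h1, h2, h3⟩
    match i, h1 with
    | 1, _ =>
      right
      have hw : 0 < w.length := by simp at h2; omega
      have : (z :: w).getD 1 0 = w.getD 0 0 := rfl
      rw [show (1:ℕ) - 1 = 0 from rfl] at h3
      rw [this, List.getD_cons_zero] at h3
      rw [if_pos ⟨hw, h3⟩]
      exact Finset.mem_singleton_self 1
    | (m+2), _ =>
      left
      refine ⟨m+1, ?_, rfl⟩
      rw [mem_ligne]
      have e1 : (z :: w).getD (m+2) 0 = w.getD (m+1) 0 := rfl
      have e2 : (z :: w).getD (m+2-1) 0 = w.getD m 0 := rfl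
      rw [e1, e2] at h3
      refine ⟨by omega, by simp at h2 ⊢; omega, ?_⟩
      simpa using h3
  · rintro (⟨a, ha, rfl⟩ | h)
    · rw [mem_ligne] at ha
      obtain ⟨ha1, ha2, ha3⟩ := ha
      refine ⟨by omega, by simp; omega, ?_⟩
      have e1 : (z :: w).getD (a+1) 0 = w.getD a 0 := rfl
      have e2' : (z :: w).getD (a+1-1) 0 = w.getD (a-1) 0 := by
        have : a + 1 - 1 = a := rfl
        rw [this]
        match a, ha1 with
        | (b+1), _ => rfl
      rw [e1, e2']
      exact ha3
    · by_cases hc : 0 < w.length ∧ w.getD 0 0 < z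
      · rw [if_pos hc] at h
        rw [Finset.mem_singleton] at h
        subst h
        refine ⟨le_refl _, by simp; omega, ?_⟩
        have e1 : (z :: w).getD 1 0 = w.getD 0 0 := rfl
        rw [e1]
        exact hc.2
      · rw [if_neg hc] at h
        simp at h

lemma ligne_one_notmem (w : List ℕ) : 1 ∉ (ligne w).image (· + 1) := by
  simp only [Finset.mem_image, not_exists]
  intro a ha
  rw [mem_ligne] at ha
  omega

lemma maj_cons (z : ℕ) (w : List ℕ) : maj (z :: w) = maj w + des w + dh z w := by
  unfold maj des dh
  rw [ligne_cons]
  by_cases hc : 0 < w.length ∧ w.getD 0 0 < z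
  · rw [if_pos hc, if_pos hc]
    rw [Finset.sum_union (by
      rw [Finset.disjoint_singleton_right]
      exact ligne_one_notmem w)]
    rw [Finset.sum_image (by intro x _ y _ h; simp only at h; omega)]
    simp [Finset.sum_add_distrib]
  · rw [if_neg hc, if_neg hc]
    rw [Finset.union_empty]
    rw [Finset.sum_image (by intro x _ y _ h; simp only at h; omega)]
    simp [Finset.sum_add_distrib]

lemma des_cons (z : ℕ) (w : List ℕ) : des (z :: w) = des w + dh z w := by
  unfold des dh
  rw [ligne_cons]
  by_cases hc : 0 < w.length ∧ w.getD 0 0 < z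
  · rw [if_pos hc, if_pos hc]
    rw [Finset.card_union_of_disjoint (by
      rw [Finset.disjoint_singleton_right]
      exact ligne_one_notmem w)]
    rw [Finset.card_image_of_injective _ (fun x y h => by simpa using h)]
    simp
  · rw [if_neg hc, if_neg hc]
    rw [Finset.union_empty]
    rw [Finset.card_image_of_injective _ (fun x y h => by simpa using h)]
    simp

lemma dh_le_one (z : ℕ) (w : List ℕ) : dh z w ≤ 1 := by
  unfold dh; split <;> omega

lemma dh_nil (z : ℕ) : dh z [] = 0 := by simp [dh]

lemma dh_cons (z y : ℕ) (t : List ℕ) : dh z (y :: t) = if y < z then 1 else 0 := by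
  simp [dh]

lemma dh_eq_zero_of_lt {j : ℕ} {β : List ℕ} (h : ∀ z ∈ β, j < z) : dh j β = 0 := by
  cases β with
  | nil => exact dh_nil j
  | cons y t =>
    rw [dh_cons, if_neg]
    have := h y (by simp)
    omega

lemma dh_append (z : ℕ) {γ : List ℕ} (X Y : List ℕ) (h : γ ≠ []) :
    dh z (γ ++ X) = dh z (γ ++ Y) := by
  cases γ with
  | nil => exact absurd rfl h
  | cons a t => simp [dh]

lemma dh_append_cons (z b : ℕ) (l X Y : List ℕ) :
    dh z (l ++ b :: X) = dh z (l ++ b :: Y) := by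
  cases l <;> simp [dh]

/-- Lemma A: inserting minimum `c` immediately after `b` (non-descent slot). -/
lemma lemA (l : List ℕ) {b c : ℕ} {r : List ℕ} (hcb : c < b)
    (h1 : dh c r = 0) (h2 : dh b r = 0) :
    maj (l ++ b :: c :: r) = maj (l ++ b :: r) + (l.length + 1 + des r) ∧
    des (l ++ b :: c :: r) = des (l ++ b :: r) + 1 := by
  induction l with
  | nil =>
    simp only [List.nil_append, List.length_nil]
    rw [maj_cons, maj_cons, maj_cons, des_cons, des_cons, des_cons, des_cons]
    rw [h1, h2, dh_cons, if_pos hcb]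
    omega
  | cons z l ih =>
    obtain ⟨ih1, ih2⟩ := ih
    simp only [List.cons_append, List.length_cons]
    rw [maj_cons, maj_cons, des_cons, des_cons, ih1, ih2]
    rw [dh_append_cons z b l (c :: r) r]
    omega

/-- Lemma C: removing the minimum `b`. -/
lemma lemC (α : List ℕ) {b : ℕ} {β : List ℕ} (h : dh b β = 0) :
    maj (α ++ b :: β) ≤ maj (α ++ β) + (α.length + des β) ∧
    des (α ++ b :: β) ≤ des (α ++ β) + (if α = [] then 0 else 1) := by
  induction α with
  | nil =>
    simp only [List.nil_append, List.length_nil, if_pos rfl]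
    rw [maj_cons, des_cons, h]
    omega
  | cons z α' ih =>
    obtain ⟨ih1, ih2⟩ := ih
    simp only [List.cons_append, List.length_cons, if_neg (List.cons_ne_nil z α')]
    by_cases hα : α' = []
    · subst hα
      simp only [List.nil_append, List.length_nil, if_pos rfl] at ih1 ih2 ⊢
      rw [maj_cons z (b :: β), maj_cons b β, maj_cons z β, des_cons z (b :: β),
        des_cons b β, des_cons z β, h]
      have hd := dh_le_one z (b :: β)
      omega
    · rw [if_neg hα] at ih2
      rw [maj_cons, maj_cons, des_cons, des_cons]
      rw [dh_append z (b :: β) β hα]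
      omega

/-- Lemma D: removing minimum `j` that is not adjacent after the marked letter. -/
lemma lemD (γ : List ℕ) {j : ℕ} {β : List ℕ} (hne : γ ≠ [])
    (hγ : ∀ z ∈ γ, j < z) (h : dh j β = 0) :
    des (γ ++ β) ≤ des (γ ++ j :: β) := by
  induction γ with
  | nil => exact absurd rfl hne
  | cons g γ' ih =>
    by_cases hγ' : γ' = []
    · subst hγ'
      simp only [List.nil_append, List.cons_append]
      rw [des_cons, des_cons, des_cons, h, dh_cons, if_pos (hγ g (by simp))]
      have := dh_le_one g β
      omega
    · simp only [List.cons_append]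
      rw [des_cons, des_cons]
      have := ih hγ' (fun z hz => hγ z (by simp [hz]))
      have e := dh_append g β (j :: β) hγ'
      omega


lemma nodup_middle {L R : List ℕ} {e : ℕ} (h : (L ++ e :: R).Nodup) : e ∉ L ∧ e ∉ R := by
  rw [List.nodup_append] at h
  exact ⟨fun hb => h.2.2 e hb e List.mem_cons_self rfl, (List.nodup_cons.mp h.2.1).1⟩

lemma filter_ge_eq_self {j : ℕ} {X : List ℕ} (h : ∀ z ∈ X, j ≤ z) :
    X.filter (fun t => j ≤ t) = X := by
  rw [List.filter_eq_self]
  intro a ha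
  simpa using h a ha

lemma filter_succ_step (w : List ℕ) (j : ℕ) :
    w.filter (fun t => j+1 ≤ t) = (w.filter (fun t => j ≤ t)).filter (fun t => j+1 ≤ t) := by
  rw [List.filter_filter]
  apply List.filter_congr
  intro a _
  by_cases h : j + 1 ≤ a
  · simp [h, Nat.le_of_succ_le h]
  · simp [h]

lemma mc_getD (w : List ℕ) (j : ℕ) (h1 : 1 ≤ j) (h2 : j ≤ w.length) :
    (mc w).getD (j-1) 0 =
      maj (w.filter (fun x => j ≤ x)) - maj (w.filter (fun x => j+1 ≤ x)) := by
  unfold mc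
  rw [List.getD_eq_getElem _ _ (by simpa using by omega : j - 1 < ((List.range w.length).map _).length)]
  simp only [List.getElem_map, List.getElem_range]
  rw [show j - 1 + 1 = j from by omega, show j - 1 + 2 = j + 1 from by omega]

theorem stmt12 (n : ℕ) (w : List ℕ) (hw : IsPermWord n w) (k : ℕ)
    (hk1 : 1 ≤ k) (hkn : k ≤ n)
    (hmono : ∀ i j : ℕ, i ≤ j → j < k → (mc w).getD i 0 ≤ (mc w).getD j 0) :
    ∀ u : List ℕ, u <:+: w → (∀ x ∈ u, x ≤ k) → u.Pairwise (· < ·) := by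
  classical
  have hlen : w.length = n := by simpa using hw.length_eq
  have hnd : w.Nodup := hw.nodup_iff.mpr List.nodup_range'
  have hmemc : ∀ z ∈ w, 1 ≤ z ∧ z ≤ n := by
    intro z hz
    have := hw.mem_iff.mp hz
    rw [List.mem_range'_1] at this
    omega
  have hmemw : ∀ z : ℕ, 1 ≤ z → z ≤ n → z ∈ w := by
    intro z h1 h2
    exact hw.mem_iff.mpr (List.mem_range'_1.mpr ⟨h1, by omega⟩)
  have key : ∀ (L : List ℕ) (X Y : ℕ) (R : List ℕ), w = L ++ X :: Y :: R → X ≤ k → ¬ Y < X := by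
    intro L X Y R hwdec hXk hYX
    set Bad : ℕ → Prop := fun j => ∃ l x y r,
      w.filter (fun t => j ≤ t) = l ++ x :: y :: r ∧ y < x ∧ x ≤ k with hBadDef
    have hBad1 : Bad 1 :=
      ⟨L, X, Y, R, by rw [filter_ge_eq_self (fun z hz => (hmemc z hz).1), hwdec], hYX, hXk⟩
    set c := Nat.findGreatest Bad k with hcdef
    have hc1 : 1 ≤ c := Nat.le_findGreatest hk1 hBad1
    have hcBad : Bad c := Nat.findGreatest_spec hk1 hBad1
    have hmax : ∀ m, c < m → m ≤ k → ¬ Bad m := fun m hm1 hm2 =>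
      Nat.findGreatest_is_greatest hm1 hm2
    have hck : c ≤ k := Nat.findGreatest_le k
    obtain ⟨l1, x1, y1, r1, hdec, hyx1, hxk1⟩ :=
      (hcBad : ∃ l x y r, w.filter (fun t => c ≤ t) = l ++ x :: y :: r ∧ y < x ∧ x ≤ k)
    have hτmem : ∀ z ∈ l1 ++ x1 :: y1 :: r1, c ≤ z := by
      intro z hz
      rw [← hdec] at hz
      simpa using List.of_mem_filter hz
    have hτnd : (l1 ++ x1 :: y1 :: r1).Nodup := by rw [← hdec]; exact hnd.filter _
    have hy1 : y1 = c := by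
      by_contra hne
      have hy1c : c + 1 ≤ y1 := by
        have := hτmem y1 (by simp); omega
      have hx1c : c + 1 ≤ x1 := by omega
      refine hmax (c+1) (by omega) (by omega)
        ⟨l1.filter (fun t => c+1 ≤ t), x1, y1, r1.filter (fun t => c+1 ≤ t), ?_, hyx1, hxk1⟩
      rw [filter_succ_step w c, hdec, List.filter_append,
        List.filter_cons_of_pos (by simpa using hx1c),
        List.filter_cons_of_pos (by simpa using hy1c)]
    subst hy1
    have hτnd' : ((l1 ++ [x1]) ++ c :: r1).Nodup := by simpa using hτnd
    obtain ⟨hcl1x, hcr1⟩ := nodup_middle hτnd'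
    have hcl1 : c ∉ l1 := fun h => hcl1x (by simp [h])
    have hl1 : ∀ z ∈ l1, c + 1 ≤ z := by
      intro z hz
      have h1 := hτmem z (by simp [hz])
      have h2 : z ≠ c := fun h => hcl1 (h ▸ hz)
      omega
    have hr1 : ∀ z ∈ r1, c + 1 ≤ z := by
      intro z hz
      have h1 := hτmem z (by simp [hz])
      have h2 : z ≠ c := fun h => hcr1 (h ▸ hz)
      omega
    have hx1c : c + 1 ≤ x1 := by omega
    have hstep : w.filter (fun t => c+1 ≤ t) = l1 ++ x1 :: r1 := by
      rw [filter_succ_step w c, hdec, List.filter_append,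
        List.filter_cons_of_pos (by simpa using hx1c),
        List.filter_cons_of_neg (by simpa using (by omega : ¬ (c+1 ≤ c))),
        filter_ge_eq_self hl1, filter_ge_eq_self hr1]
    have hdh1 : dh c r1 = 0 := dh_eq_zero_of_lt (fun z hz => by have := hr1 z hz; omega)
    have hdh2 : dh x1 r1 = 0 := by
      cases r1 with
      | nil => exact dh_nil x1
      | cons h0 t0 =>
        rw [dh_cons, if_neg]
        intro hlt
        exact hmax (c+1) (by omega) (by omega) ⟨l1, x1, h0, t0, hstep, hlt, hxk1⟩
    obtain ⟨hA, -⟩ := lemA l1 hyx1 hdh1 hdh2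
    have hdc : (mc w).getD (c-1) 0 = l1.length + 1 + des r1 := by
      rw [mc_getD w c hc1 (by omega), hdec, hstep, hA]
      omega
    have chain : ∀ d j, c + 1 ≤ j → j + d = x1 → ∀ α β,
        w.filter (fun t => j ≤ t) = α ++ x1 :: β →
        (mc w).getD (x1-1) 0 < α.length + 1 + des β := by
      intro d
      induction d with
      | zero =>
        intro j hj1 hj2 α β hd
        have hj : j = x1 := by omega
        subst hj
        have hndτ : (α ++ j :: β).Nodup := by rw [← hd]; exact hnd.filter _
        obtain ⟨hbα, hbβ⟩ := nodup_middle hndτ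
        have hmemτ : ∀ z ∈ α ++ j :: β, j ≤ z := by
          intro z hz; rw [← hd] at hz; simpa using List.of_mem_filter hz
        have hα : ∀ z ∈ α, j + 1 ≤ z := by
          intro z hz
          have h1 := hmemτ z (by simp [hz])
          have h2 : z ≠ j := fun h => hbα (h ▸ hz)
          omega
        have hβ : ∀ z ∈ β, j + 1 ≤ z := by
          intro z hz
          have h1 := hmemτ z (by simp [hz])
          have h2 : z ≠ j := fun h => hbβ (h ▸ hz)
          omega
        have hstep2 : w.filter (fun t => j+1 ≤ t) = α ++ β := by
          rw [filter_succ_step w j, hd, List.filter_append,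
            List.filter_cons_of_neg (by simpa using (by omega : ¬ (j+1 ≤ j))),
            filter_ge_eq_self hα, filter_ge_eq_self hβ]
        obtain ⟨hC, -⟩ := lemC α (show dh j β = 0 from
          dh_eq_zero_of_lt (fun z hz => by have := hβ z hz; omega))
        rw [mc_getD w j (by omega) (by omega), hd, hstep2]
        omega
      | succ d ih =>
        intro j hj1 hj2 α β hd
        have hjx : j < x1 := by omega
        have hjmem : j ∈ α ++ x1 :: β := by
          rw [← hd]
          exact List.mem_filter.mpr ⟨hmemw j (by omega) (by omega), by simp⟩
        have hndτ : (α ++ x1 :: β).Nodup := by rw [← hd]; exact hnd.filter _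
        have hmemτ : ∀ z ∈ α ++ x1 :: β, j ≤ z := by
          intro z hz; rw [← hd] at hz; simpa using List.of_mem_filter hz
        rcases List.mem_append.mp hjmem with hjα | hjcons
        · obtain ⟨a1, a2, ha⟩ := List.append_of_mem hjα
          subst ha
          have hnd2 : (a1 ++ j :: (a2 ++ x1 :: β)).Nodup := by simpa using hndτ
          obtain ⟨hja1, hjrest⟩ := nodup_middle hnd2
          have hja2 : j ∉ a2 := fun h => hjrest (by simp [h])
          have hjβ' : j ∉ β := fun h => hjrest (by simp [h])
          have ha1 : ∀ z ∈ a1, j + 1 ≤ z := by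
            intro z hz
            have h1 := hmemτ z (by simp [hz])
            have h2 : z ≠ j := fun h => hja1 (h ▸ hz)
            omega
          have ha2' : ∀ z ∈ a2, j + 1 ≤ z := by
            intro z hz
            have h1 := hmemτ z (by simp [hz])
            have h2 : z ≠ j := fun h => hja2 (h ▸ hz)
            omega
          have hβ' : ∀ z ∈ β, j + 1 ≤ z := by
            intro z hz
            have h1 := hmemτ z (by simp [hz])
            have h2 : z ≠ j := fun h => hjβ' (h ▸ hz)
            omega
          have hstep2 : w.filter (fun t => j+1 ≤ t) = (a1 ++ a2) ++ x1 :: β := by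
            rw [filter_succ_step w j, hd, List.filter_append, List.filter_append,
              List.filter_cons_of_neg (by simpa using (by omega : ¬ (j+1 ≤ j))),
              List.filter_cons_of_pos (by simpa using (show j+1 ≤ x1 by omega)),
              filter_ge_eq_self ha1, filter_ge_eq_self ha2', filter_ge_eq_self hβ']
          have hih := ih (j+1) (by omega) (by omega) (a1 ++ a2) β hstep2
          simp only [List.length_append, List.length_cons] at hih ⊢
          omega
        · have hjβmem : j ∈ β := by
            rcases List.mem_cons.mp hjcons with h | h
            · omega
            · exact h
          obtain ⟨b1, b2, hb⟩ := List.append_of_mem hjβmem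
          subst hb
          have hnd2 : ((α ++ x1 :: b1) ++ j :: b2).Nodup := by simpa using hndτ
          obtain ⟨hjfront, hjb2⟩ := nodup_middle hnd2
          have hjα' : j ∉ α := fun h => hjfront (by simp [h])
          have hjb1 : j ∉ b1 := fun h => hjfront (by simp [h])
          have hb1ne : b1 ≠ [] := by
            intro h0
            subst h0
            exact hmax j (by omega) (by omega) ⟨α, x1, j, b2, by simpa using hd, hjx, hxk1⟩
          have hα' : ∀ z ∈ α, j + 1 ≤ z := by
            intro z hz
            have h1 := hmemτ z (by simp [hz])
            have h2 : z ≠ j := fun h => hjα' (h ▸ hz)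
            omega
          have hb1' : ∀ z ∈ b1, j + 1 ≤ z := by
            intro z hz
            have h1 := hmemτ z (by simp [hz])
            have h2 : z ≠ j := fun h => hjb1 (h ▸ hz)
            omega
          have hb2' : ∀ z ∈ b2, j + 1 ≤ z := by
            intro z hz
            have h1 := hmemτ z (by simp [hz])
            have h2 : z ≠ j := fun h => hjb2 (h ▸ hz)
            omega
          have hstep2 : w.filter (fun t => j+1 ≤ t) = α ++ x1 :: (b1 ++ b2) := by
            rw [filter_succ_step w j, hd, List.filter_append,
              List.filter_cons_of_pos (by simpa using (show j+1 ≤ x1 by omega)),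
              List.filter_append,
              List.filter_cons_of_neg (by simpa using (by omega : ¬ (j+1 ≤ j))),
              filter_ge_eq_self hα', filter_ge_eq_self hb1', filter_ge_eq_self hb2']
          have hih := ih (j+1) (by omega) (by omega) α (b1 ++ b2) hstep2
          have hD := lemD b1 (j := j) (β := b2) hb1ne
            (fun z hz => by have := hb1' z hz; omega)
            (dh_eq_zero_of_lt (fun z hz => by have := hb2' z hz; omega))
          omega
    have hfinal := chain (x1 - (c+1)) (c+1) (le_refl _) (by omega) l1 r1 hstep
    have hm := hmono (c-1) (x1-1) (by omega) (by omega)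
    rw [hdc] at hm
    omega
  have sorted_aux : ∀ v : List ℕ, v <:+: w → (∀ z ∈ v, z ≤ k) → List.IsChain (· < ·) v := by
    intro v
    induction v with
    | nil => intro _ _; simp
    | cons a t ih =>
      intro hin hvle
      cases t with
      | nil => simp
      | cons a' t' =>
        rw [List.isChain_cons_cons]
        obtain ⟨s, t2, hst⟩ := hin
        have hw' : w = s ++ a :: a' :: (t' ++ t2) := by rw [← hst]; simp
        constructor
        · have hk' := key s a a' (t' ++ t2) hw' (hvle a (by simp))
          have hnd2 : (s ++ a :: a' :: (t' ++ t2)).Nodup := hw' ▸ hnd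
          have h2 := (nodup_middle hnd2).2
          have hne : a ≠ a' := fun h => h2 (by simp [h])
          omega
        · exact ih ⟨s ++ [a], t2, by rw [← hst]; simp⟩ (fun z hz => hvle z (by simp [hz]))
  intro u hinf hule
  exact List.isChain_iff_pairwise.mp (sorted_aux u hinf hule)
end

section
/- Let σ ∈ S_n with Mc σ = d₁d₂⋯d_n, and let k ∈ {1,…,n} satisfy: (C1) d₁ ≤ d₂ ≤ ⋯ ≤ d_{k−1}; (C2) d_{k−1} > d_k; (C3) d_k ≤ d₁; (C4) in σ the letter k occurs to the right of every letter i < k. Then τ = Mc⁻¹(d_k d₁ d₂ ⋯ d_{k−1} d_{k+1} ⋯ d_n) satisfies Ligne σ = Ligne τ. -/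
namespace Stmt13

def ins (a : ℕ) (u : List ℕ) (j : ℕ) : List ℕ := u.take j ++ a :: u.drop j

def Ffun (D : Finset ℕ) (j : ℕ) : ℕ :=
  (if j = 0 ∨ j ∈ D then 0 else j) + (D.filter (fun i => j < i)).card

def GFset (D : Finset ℕ) (j : ℕ) : Finset ℕ :=
  (D.filter (fun i => i < j) ∪ (if 1 ≤ j then {j} else ∅)) ∪ (D.filter (fun i => j < i)).image (· + 1)

def DSset (D : Finset ℕ) (q : ℕ) : Finset ℕ :=
  D.filter (fun i => i ≤ q) ∪ (D.filter (fun i => q < i)).image (· + 1)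

theorem mem_ligne {w : List ℕ} {i : ℕ} :
    i ∈ ligne w ↔ 1 ≤ i ∧ i < w.length ∧ w.getD i 0 < w.getD (i-1) 0 := by
  simp only [ligne, Finset.mem_filter, Finset.mem_Icc]
  constructor
  · rintro ⟨⟨h1, h2⟩, h3⟩
    refine ⟨h1, by omega, h3⟩
  · rintro ⟨h1, h2, h3⟩
    exact ⟨⟨h1, by omega⟩, h3⟩

theorem zero_not_mem_ligne {w : List ℕ} : 0 ∉ ligne w := by
  simp [mem_ligne]

theorem length_ins {a : ℕ} {u : List ℕ} {j : ℕ} (hj : j ≤ u.length) :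
    (ins a u j).length = u.length + 1 := by
  simp [ins]; omega

theorem getD_ins_lt {a : ℕ} {u : List ℕ} {j t : ℕ} (hj : j ≤ u.length) (ht : t < j) :
    (ins a u j).getD t 0 = u.getD t 0 := by
  simp only [ins, List.getD_eq_getElem?_getD, List.getElem?_append, List.length_take]
  rw [if_pos (by omega), List.getElem?_take, if_pos ht]

theorem getD_ins_eq {a : ℕ} {u : List ℕ} {j : ℕ} (hj : j ≤ u.length) :
    (ins a u j).getD j 0 = a := by
  simp only [ins, List.getD_eq_getElem?_getD, List.getElem?_append, List.length_take]
  rw [if_neg (by omega)]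
  have : j - min j u.length = 0 := by omega
  rw [this]
  simp

theorem getD_ins_gt {a : ℕ} {u : List ℕ} {j t : ℕ} (hj : j ≤ u.length) (ht : j < t) :
    (ins a u j).getD t 0 = u.getD (t-1) 0 := by
  simp only [ins, List.getD_eq_getElem?_getD, List.getElem?_append, List.length_take]
  rw [if_neg (by omega)]
  have h1 : t - min j u.length = (t - j - 1) + 1 := by omega
  rw [h1]
  simp only [List.getElem?_cons_succ, List.getElem?_drop]
  have h2 : j + (t - j - 1) = t - 1 := by omega
  rw [h2]


theorem getD_mem_drop {u : List ℕ} {j t : ℕ} (h : t < u.length) (hjt : j ≤ t) :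
    u.getD t 0 ∈ u.drop j := by
  have h2 : t - j < (u.drop j).length := by rw [List.length_drop]; omega
  have h3 : (u.drop j).getD (t-j) 0 ∈ u.drop j := by
    rw [List.getD_eq_getElem _ _ h2]; exact List.getElem_mem h2
  have h4 : (u.drop j).getD (t-j) 0 = u.getD t 0 := by
    simp only [List.getD_eq_getElem?_getD, List.getElem?_drop]
    rw [show j + (t - j) = t by omega]
  rwa [h4] at h3

theorem mem_ligne_ins {a : ℕ} {u : List ℕ} {j i : ℕ} (hj : j ≤ u.length)
    (hdrop : ∀ x ∈ u.drop j, a < x) :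
    i ∈ ligne (ins a u j) ↔
      (i < j ∧ i ∈ ligne u) ∨ (i = j ∧ 1 ≤ j ∧ a < u.getD (j-1) 0) ∨
        (j + 2 ≤ i ∧ i - 1 ∈ ligne u) := by
  have hlen := length_ins (a := a) hj
  have hkey : j < u.length → a < u.getD j 0 := fun h =>
    hdrop _ (getD_mem_drop h le_rfl)
  rcases lt_trichotomy i j with h | h | h
  · simp only [mem_ligne, hlen, getD_ins_lt hj h,
      getD_ins_lt hj (show i - 1 < j by omega)]
    omega
  · subst h
    rcases Nat.eq_zero_or_pos i with h0 | h0
    · subst h0; simp only [mem_ligne, hlen]; omega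
    · simp only [mem_ligne, hlen, getD_ins_eq hj,
        getD_ins_lt hj (show i - 1 < i by omega)]
      simp only [eq_self_iff_true, true_and]
      omega
  · rcases eq_or_lt_of_le (Nat.succ_le_of_lt h) with h1 | h1
    · rcases Nat.lt_or_ge j u.length with h2 | h2
      · have hk := hkey h2
        simp only [mem_ligne, hlen, getD_ins_gt hj h,
          show i - 1 = j from by omega, getD_ins_eq hj]
        omega
      · simp only [mem_ligne, hlen]
        omega
    · simp only [mem_ligne, hlen, getD_ins_gt hj h,
        getD_ins_gt hj (show j < i - 1 by omega)]
      omega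

theorem mem_GFset {D : Finset ℕ} {j t : ℕ} :
    t ∈ GFset D j ↔ (t ∈ D ∧ t < j) ∨ (t = j ∧ 1 ≤ j) ∨ (j + 2 ≤ t ∧ t - 1 ∈ D) := by
  simp only [GFset, Finset.mem_union, Finset.mem_filter, Finset.mem_image]
  constructor
  · rintro ((⟨h1, h2⟩ | h) | ⟨i, ⟨hi1, hi2⟩, hi3⟩)
    · exact Or.inl ⟨h1, h2⟩
    · rcases Nat.lt_or_ge j 1 with hj | hj
      · rw [if_neg (by omega)] at h; exact absurd h (Finset.notMem_empty t)
      · rw [if_pos hj] at h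
        exact Or.inr (Or.inl ⟨Finset.mem_singleton.mp h, hj⟩)
    · refine Or.inr (Or.inr ⟨by omega, ?_⟩)
      rw [show t - 1 = i by omega]; exact hi1
  · rintro (⟨h1, h2⟩ | ⟨h1, h2⟩ | ⟨h1, h2⟩)
    · exact Or.inl (Or.inl ⟨h1, h2⟩)
    · subst h1; rw [if_pos h2]; exact Or.inl (Or.inr (Finset.mem_singleton_self t))
    · exact Or.inr ⟨t - 1, ⟨h2, by omega⟩, by omega⟩

theorem mem_DSset {D : Finset ℕ} {q t : ℕ} :
    t ∈ DSset D q ↔ (t ∈ D ∧ t ≤ q) ∨ (q + 2 ≤ t ∧ t - 1 ∈ D) := by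
  simp only [DSset, Finset.mem_union, Finset.mem_filter, Finset.mem_image]
  constructor
  · rintro (⟨h1, h2⟩ | ⟨i, ⟨hi1, hi2⟩, hi3⟩)
    · exact Or.inl ⟨h1, h2⟩
    · refine Or.inr ⟨by omega, ?_⟩
      rw [show t - 1 = i by omega]; exact hi1
  · rintro (⟨h1, h2⟩ | ⟨h1, h2⟩)
    · exact Or.inl ⟨h1, h2⟩
    · exact Or.inr ⟨t - 1, ⟨h2, by omega⟩, by omega⟩

theorem ligne_ins_min {a : ℕ} {u : List ℕ} {j : ℕ} (hj : j ≤ u.length)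
    (ha : ∀ x ∈ u, a < x) :
    ligne (ins a u j) = GFset (ligne u) j := by
  ext t
  rw [mem_ligne_ins hj (fun x hx => ha x (List.mem_of_mem_drop hx)), mem_GFset]
  constructor
  · rintro (⟨h1, h2⟩ | ⟨h1, h2, h3⟩ | ⟨h1, h2⟩)
    · exact Or.inl ⟨h2, h1⟩
    · exact Or.inr (Or.inl ⟨h1, h2⟩)
    · exact Or.inr (Or.inr ⟨h1, h2⟩)
  · rintro (⟨h1, h2⟩ | ⟨h1, h2⟩ | ⟨h1, h2⟩)
    · exact Or.inl ⟨h2, h1⟩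
    · refine Or.inr (Or.inl ⟨h1, h2, ha _ ?_⟩)
      have : j - 1 < u.length := by omega
      rw [List.getD_eq_getElem _ _ this]
      exact List.getElem_mem this
    · exact Or.inr (Or.inr ⟨h1, h2⟩)

theorem ligne_ins_ds {a : ℕ} {u : List ℕ} {j : ℕ} (hj : j ≤ u.length)
    (hdrop : ∀ x ∈ u.drop j, a < x)
    (hb : 1 ≤ j → a < u.getD (j-1) 0 → j ∈ ligne u) :
    ligne (ins a u j) = DSset (ligne u) j := by
  ext t
  rw [mem_ligne_ins hj hdrop, mem_DSset]
  constructor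
  · rintro (⟨h1, h2⟩ | ⟨h1, h2, h3⟩ | ⟨h1, h2⟩)
    · exact Or.inl ⟨h2, by omega⟩
    · exact Or.inl ⟨h1 ▸ hb h2 h3, by omega⟩
    · exact Or.inr ⟨h1, h2⟩
  · rintro (⟨h1, h2⟩ | ⟨h1, h2⟩)
    · rcases Nat.lt_or_ge t j with h3 | h3
      · exact Or.inl ⟨h3, h1⟩
      · have htj : t = j := by omega
        subst htj
        have h4 := mem_ligne.mp h1
        have h5 : a < u.getD t 0 := hdrop _ (getD_mem_drop (by omega) le_rfl)
        exact Or.inr (Or.inl ⟨rfl, by omega, by omega⟩)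
    · exact Or.inr (Or.inr ⟨h1, h2⟩)

theorem card_filter_lt {D : Finset ℕ} (hD : 0 ∉ D) (t : ℕ) :
    (D.filter (fun i => i < t)).card ≤ t - 1 := by
  have hsub : D.filter (fun i => i < t) ⊆ Finset.Icc 1 (t-1) := by
    intro x hx
    simp only [Finset.mem_filter] at hx
    have : x ≠ 0 := fun h => hD (h ▸ hx.1)
    simp only [Finset.mem_Icc]; omega
  calc (D.filter (fun i => i < t)).card ≤ (Finset.Icc 1 (t-1)).card := Finset.card_le_card hsub
    _ = t - 1 := by rw [Nat.card_Icc]; omega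

theorem card_filter_between (D : Finset ℕ) (a b : ℕ) :
    (D.filter (fun i => a < i ∧ i < b)).card ≤ b - 1 - a := by
  have hsub : D.filter (fun i => a < i ∧ i < b) ⊆ Finset.Icc (a+1) (b-1) := by
    intro x hx
    simp only [Finset.mem_filter] at hx
    simp only [Finset.mem_Icc]; omega
  calc (D.filter (fun i => a < i ∧ i < b)).card ≤ (Finset.Icc (a+1) (b-1)).card :=
      Finset.card_le_card hsub
    _ ≤ b - 1 - a := by rw [Nat.card_Icc]; omega

theorem card_split_at {D : Finset ℕ} {j q : ℕ} (hq : j ≤ q) :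
    (D.filter (fun i => j < i)).card
      = (D.filter (fun i => j < i ∧ i ≤ q)).card + (D.filter (fun i => q < i)).card := by
  have h1 : D.filter (fun i => j < i)
      = (D.filter (fun i => j < i ∧ i ≤ q)) ∪ (D.filter (fun i => q < i)) := by
    ext t
    simp only [Finset.mem_filter, Finset.mem_union]
    constructor
    · rintro ⟨h1, h2⟩
      rcases Nat.lt_or_ge q t with h3 | h3
      · exact Or.inr ⟨h1, h3⟩
      · exact Or.inl ⟨h1, h2, h3⟩
    · rintro (⟨h1, h2, h3⟩ | ⟨h1, h2⟩)
      · exact ⟨h1, h2⟩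
      · exact ⟨h1, by omega⟩
  rw [h1, Finset.card_union_of_disjoint]
  rw [Finset.disjoint_left]
  intro t ht1 ht2
  simp only [Finset.mem_filter] at ht1 ht2
  omega

theorem sum_image_succ (C : Finset ℕ) :
    ∑ i ∈ C.image (· + 1), i = (∑ i ∈ C, i) + C.card := by
  rw [Finset.sum_image (fun a _ b _ h => by omega)]
  rw [Finset.sum_add_distrib, Finset.sum_const, smul_eq_mul, mul_one]

theorem sum_split_at (D : Finset ℕ) (j : ℕ) :
    ∑ i ∈ D, i = (∑ i ∈ D.filter (fun i => i < j), i)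
      + (if j ∈ D then j else 0) + (∑ i ∈ D.filter (fun i => j < i), i) := by
  have h1 : D.filter (fun i => ¬ i < j) = (D.filter (fun i => i = j)) ∪ (D.filter (fun i => j < i)) := by
    ext t
    simp only [Finset.mem_filter, Finset.mem_union]
    constructor
    · rintro ⟨ha, hb⟩
      rcases Nat.lt_or_ge j t with h3 | h3
      · exact Or.inr ⟨ha, h3⟩
      · exact Or.inl ⟨ha, by omega⟩
    · rintro (⟨ha, hb⟩ | ⟨ha, hb⟩) <;> exact ⟨ha, by omega⟩
  have hdisj : Disjoint (D.filter (fun i => i = j)) (D.filter (fun i => j < i)) := by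
    rw [Finset.disjoint_left]
    intro t ht1 ht2
    simp only [Finset.mem_filter] at ht1 ht2
    omega
  have h2 : ∑ i ∈ D.filter (fun i => ¬ i < j), i
      = (if j ∈ D then j else 0) + (∑ i ∈ D.filter (fun i => j < i), i) := by
    rw [h1, Finset.sum_union hdisj]
    congr 1
    rw [Finset.filter_eq']
    split
    · rw [Finset.sum_singleton]
    · rw [Finset.sum_empty]
  have h3 := Finset.sum_filter_add_sum_filter_not D (fun i => i < j) (fun i => i)
  omega

theorem sum_DSset {D : Finset ℕ} (q : ℕ) :
    ∑ i ∈ DSset D q, i = (∑ i ∈ D, i) + (D.filter (fun i => q < i)).card := by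
  unfold DSset
  rw [Finset.sum_union, sum_image_succ]
  · have h2 : ∑ i ∈ D, i = (∑ i ∈ D.filter (fun i => i ≤ q), i)
        + (∑ i ∈ D.filter (fun i => q < i), i) := by
      rw [← Finset.sum_filter_add_sum_filter_not D (fun i => i ≤ q)]
      congr 2
      apply Finset.filter_congr
      intro x _
      simp only [not_le, decide_eq_true_eq]  -- align predicates
    omega
  · rw [Finset.disjoint_left]
    intro t ht1 ht2
    simp only [Finset.mem_filter, Finset.mem_image] at ht1 ht2
    obtain ⟨i, hi1, hi2⟩ := ht2
    omega

theorem sum_GFset {D : Finset ℕ} (hD : 0 ∉ D) (j : ℕ) :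
    ∑ i ∈ GFset D j, i = (∑ i ∈ D, i) + Ffun D j := by
  unfold GFset Ffun
  rw [Finset.sum_union, Finset.sum_union, sum_image_succ, sum_split_at D j]
  · have hE : ∑ i ∈ (if 1 ≤ j then ({j} : Finset ℕ) else ∅), i = if 1 ≤ j then j else 0 := by
      split <;> simp
    rw [hE]
    have hjD : j ∈ D → 1 ≤ j := by
      intro h
      rcases Nat.eq_zero_or_pos j with h0 | h0
      · exact absurd (h0 ▸ h) hD
      · exact h0
    by_cases hj : j ∈ D
    · rw [if_pos (hjD hj), if_pos hj, if_pos (Or.inr hj)]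
      omega
    · by_cases hj0 : j = 0
      · subst hj0
        rw [if_neg (by omega), if_neg hj, if_pos (Or.inl rfl)]
        omega
      · rw [if_pos (by omega), if_neg hj, if_neg (by tauto)]
        omega
  · rw [Finset.disjoint_left]
    intro t ht1 ht2
    simp only [Finset.mem_filter] at ht1
    by_cases h1 : 1 ≤ j
    · rw [if_pos h1, Finset.mem_singleton] at ht2; omega
    · rw [if_neg h1] at ht2; exact Finset.notMem_empty t ht2
  · rw [Finset.disjoint_left]
    intro t ht1 ht2
    simp only [Finset.mem_union, Finset.mem_filter, Finset.mem_image] at ht1 ht2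
    obtain ⟨i, hi1, hi2⟩ := ht2
    rcases ht1 with ⟨h1, h2⟩ | h1
    · omega
    · by_cases h2 : 1 ≤ j
      · rw [if_pos h2, Finset.mem_singleton] at h1; omega
      · rw [if_neg h2] at h1; exact Finset.notMem_empty t h1

theorem maj_ins_min {a : ℕ} {u : List ℕ} {j : ℕ} (hj : j ≤ u.length)
    (ha : ∀ x ∈ u, a < x) :
    maj (ins a u j) = maj u + Ffun (ligne u) j := by
  unfold maj
  rw [ligne_ins_min hj ha, sum_GFset zero_not_mem_ligne]

theorem maj_ins_ds {a : ℕ} {u : List ℕ} {j : ℕ} (hj : j ≤ u.length)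
    (hdrop : ∀ x ∈ u.drop j, a < x)
    (hb : 1 ≤ j → a < u.getD (j-1) 0 → j ∈ ligne u) :
    maj (ins a u j) = maj u + ((ligne u).filter (fun i => j < i)).card := by
  unfold maj
  rw [ligne_ins_ds hj hdrop hb, sum_DSset]

theorem card_filter_lt_card {D : Finset ℕ} (t : ℕ) :
    (D.filter (fun i => t < i)).card ≤ D.card :=
  Finset.card_le_card (Finset.filter_subset _ _)

theorem card_split_out {D : Finset ℕ} {j' : ℕ} (hj' : j' ∉ D) :
    D.card = (D.filter (fun i => i < j')).card + (D.filter (fun i => j' < i)).card := by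
  have h1 : D = (D.filter (fun i => i < j')) ∪ (D.filter (fun i => j' < i)) := by
    ext t
    simp only [Finset.mem_filter, Finset.mem_union]
    constructor
    · intro ht
      have : t ≠ j' := fun h => hj' (h ▸ ht)
      rcases Nat.lt_or_ge t j' with h3 | h3
      · exact Or.inl ⟨ht, h3⟩
      · exact Or.inr ⟨ht, by omega⟩
    · rintro (⟨ht, _⟩ | ⟨ht, _⟩) <;> exact ht
  conv_lhs => rw [h1]
  rw [Finset.card_union_of_disjoint]
  rw [Finset.disjoint_left]
  intro t ht1 ht2
  simp only [Finset.mem_filter] at ht1 ht2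
  omega

theorem card_split_mid {D : Finset ℕ} {j j' : ℕ} (hlt : j < j') (hj' : j' ∉ D) :
    (D.filter (fun i => j < i)).card
      = (D.filter (fun i => j < i ∧ i < j')).card + (D.filter (fun i => j' < i)).card := by
  have h1 : D.filter (fun i => j < i)
      = (D.filter (fun i => j < i ∧ i < j')) ∪ (D.filter (fun i => j' < i)) := by
    ext t
    simp only [Finset.mem_filter, Finset.mem_union]
    constructor
    · rintro ⟨ht, h2⟩
      have : t ≠ j' := fun h => hj' (h ▸ ht)
      rcases Nat.lt_or_ge t j' with h3 | h3
      · exact Or.inl ⟨ht, h2, h3⟩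
      · exact Or.inr ⟨ht, by omega⟩
    · rintro (⟨ht, h2, h3⟩ | ⟨ht, h2⟩)
      · exact ⟨ht, h2⟩
      · exact ⟨ht, by omega⟩
  rw [h1, Finset.card_union_of_disjoint]
  rw [Finset.disjoint_left]
  intro t ht1 ht2
  simp only [Finset.mem_filter] at ht1 ht2
  omega

theorem Ffun_inj {D : Finset ℕ} (hD : 0 ∉ D) {j j' : ℕ}
    (h : Ffun D j = Ffun D j') : j = j' := by
  by_contra hne
  wlog hlt : j < j' generalizing j j'
  · exact this h.symm (Ne.symm hne) (by omega)
  unfold Ffun at h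
  by_cases hj : j = 0 ∨ j ∈ D <;> by_cases hj' : j' = 0 ∨ j' ∈ D
  · -- both descent-type
    rw [if_pos hj, if_pos hj'] at h
    have hj'D : j' ∈ D := by
      rcases hj' with h0 | h0
      · omega
      · exact h0
    have hsub : insert j' (D.filter (fun i => j' < i)) ⊆ D.filter (fun i => j < i) := by
      intro t ht
      rcases Finset.mem_insert.mp ht with h1 | h1
      · subst h1; exact Finset.mem_filter.mpr ⟨hj'D, hlt⟩
      · have := Finset.mem_filter.mp h1
        exact Finset.mem_filter.mpr ⟨this.1, by omega⟩
    have hcard := Finset.card_le_card hsub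
    rw [Finset.card_insert_of_notMem (by simp)] at hcard
    omega
  · -- j descent, j' not
    rw [if_pos hj, if_neg hj'] at h
    push_neg at hj'
    have h1 := card_filter_lt_card (D := D) j
    have h2 := card_split_out hj'.2
    have h3 := card_filter_lt (D := D) hD j'
    omega
  · -- j not, j' descent
    rw [if_neg hj, if_pos hj'] at h
    push_neg at hj
    have h1 := card_filter_lt_card (D := D) j'
    have h2 := card_split_out hj.2
    have h3 := card_filter_lt (D := D) hD j
    omega
  · -- both non-descent
    rw [if_neg hj, if_neg hj'] at h
    push_neg at hj hj'
    have h1 := card_split_mid hlt hj'.2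
    have h2 := card_filter_between D j j'
    omega

theorem Ffun_DSset {D : Finset ℕ} {j q : ℕ} (hq : j ≤ q) :
    Ffun (DSset D q) j = Ffun D j := by
  unfold Ffun
  have hmem : (j = 0 ∨ j ∈ DSset D q) ↔ (j = 0 ∨ j ∈ D) := by
    rw [mem_DSset]
    constructor
    · rintro (h | (⟨h1, h2⟩ | ⟨h1, h2⟩))
      · exact Or.inl h
      · exact Or.inr h1
      · omega
    · rintro (h | h)
      · exact Or.inl h
      · exact Or.inr (Or.inl ⟨h, hq⟩)
  have hcard : ((DSset D q).filter (fun i => j < i)).card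
      = (D.filter (fun i => j < i ∧ i ≤ q)).card + (D.filter (fun i => q < i)).card := by
    have h1 : (DSset D q).filter (fun i => j < i)
        = (D.filter (fun i => j < i ∧ i ≤ q)) ∪ ((D.filter (fun i => q < i)).image (· + 1)) := by
      ext t
      constructor
      · intro ht
        obtain ⟨htD, ht2⟩ := Finset.mem_filter.mp ht
        rcases mem_DSset.mp htD with ⟨ha, hb⟩ | ⟨ha, hb⟩
        · exact Finset.mem_union_left _ (Finset.mem_filter.mpr ⟨ha, ht2, hb⟩)
        · exact Finset.mem_union_right _ (Finset.mem_image.mpr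
            ⟨t-1, Finset.mem_filter.mpr ⟨hb, by omega⟩, by omega⟩)
      · intro ht
        rcases Finset.mem_union.mp ht with h | h
        · obtain ⟨ha, hb, hc⟩ := Finset.mem_filter.mp h
          exact Finset.mem_filter.mpr ⟨mem_DSset.mpr (Or.inl ⟨ha, hc⟩), hb⟩
        · obtain ⟨i, hi, hc⟩ := Finset.mem_image.mp h
          obtain ⟨hi1, hi2⟩ := Finset.mem_filter.mp hi
          refine Finset.mem_filter.mpr ⟨mem_DSset.mpr (Or.inr ⟨by omega, ?_⟩), by omega⟩
          rw [show t - 1 = i by omega]; exact hi1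
    rw [h1, Finset.card_union_of_disjoint, Finset.card_image_of_injective _ (fun a b hab => by omega)]
    rw [Finset.disjoint_left]
    intro t ht1 ht2
    simp only [Finset.mem_filter, Finset.mem_image] at ht1 ht2
    obtain ⟨i, ⟨hi1, hi2⟩, h2⟩ := ht2
    omega
  have hsplit := card_split_at (D := D) hq
  by_cases hj : j = 0 ∨ j ∈ D
  · rw [if_pos hj, if_pos (hmem.mpr hj)]
    omega
  · rw [if_neg hj, if_neg (fun h => hj (hmem.mp h))]
    omega

theorem exists_slot {D : Finset ℕ} (hD : 0 ∉ D) (q : ℕ) :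
    ∃ s, (s = 0 ∨ s ∈ D) ∧ s ≤ q ∧
      Ffun D s = (D.filter (fun i => q < i)).card ∧ GFset D s = DSset D q := by
  by_cases hne : (D.filter (fun i => i ≤ q)).Nonempty
  · set s := (D.filter (fun i => i ≤ q)).max' hne with hs
    have hsmem : s ∈ D.filter (fun i => i ≤ q) := Finset.max'_mem _ hne
    have hsD : s ∈ D := (Finset.mem_filter.mp hsmem).1
    have hsq : s ≤ q := (Finset.mem_filter.mp hsmem).2
    have hmax : ∀ t ∈ D, t ≤ q → t ≤ s := fun t ht htq =>
      Finset.le_max' (D.filter (fun i => i ≤ q)) t (Finset.mem_filter.mpr ⟨ht, htq⟩)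
    have hs1 : 1 ≤ s := by
      rcases Nat.eq_zero_or_pos s with h0 | h0
      · exact absurd (h0 ▸ hsD) hD
      · exact h0
    have hfilt : D.filter (fun i => s < i) = D.filter (fun i => q < i) := by
      ext t
      simp only [Finset.mem_filter]
      constructor
      · rintro ⟨h1, h2⟩
        refine ⟨h1, ?_⟩
        by_contra h3
        have := hmax t h1 (by omega)
        omega
      · rintro ⟨h1, h2⟩
        exact ⟨h1, by omega⟩
    refine ⟨s, Or.inr hsD, hsq, ?_, ?_⟩
    · rw [Ffun, if_pos (Or.inr hsD), hfilt]; omega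
    · ext t
      rw [mem_GFset, mem_DSset]
      constructor
      · rintro (⟨h1, h2⟩ | ⟨h1, h2⟩ | ⟨h1, h2⟩)
        · exact Or.inl ⟨h1, by omega⟩
        · exact Or.inl ⟨h1 ▸ hsD, by omega⟩
        · refine Or.inr ⟨?_, h2⟩
          by_contra h3
          have := hmax _ h2 (by omega)
          omega
      · rintro (⟨h1, h2⟩ | ⟨h1, h2⟩)
        · have := hmax t h1 h2
          rcases Nat.lt_or_ge t s with h3 | h3
          · exact Or.inl ⟨h1, h3⟩
          · exact Or.inr (Or.inl ⟨by omega, hs1⟩)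
        · exact Or.inr (Or.inr ⟨by omega, h2⟩)
  · refine ⟨0, Or.inl rfl, Nat.zero_le q, ?_, ?_⟩
    · have hfilt : D.filter (fun i => (0:ℕ) < i) = D := by
        apply Finset.filter_true_of_mem
        intro x hx
        have : x ≠ 0 := fun h => hD (h ▸ hx)
        omega
      have hfilt2 : D.filter (fun i => q < i) = D := by
        apply Finset.filter_true_of_mem
        intro x hx
        by_contra h3
        exact hne ⟨x, Finset.mem_filter.mpr ⟨hx, by omega⟩⟩
      rw [Ffun, if_pos (Or.inl rfl), hfilt, hfilt2]
      omega
    · ext t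
      rw [mem_GFset, mem_DSset]
      have hempty : ∀ x ∈ D, ¬ x ≤ q := by
        intro x hx h3
        exact hne ⟨x, Finset.mem_filter.mpr ⟨hx, h3⟩⟩
      constructor
      · rintro (⟨h1, h2⟩ | ⟨h1, h2⟩ | ⟨h1, h2⟩)
        · omega
        · omega
        · exact Or.inr ⟨by have := hempty _ h2; omega, h2⟩
      · rintro (⟨h1, h2⟩ | ⟨h1, h2⟩)
        · exact absurd h2 (hempty _ h1)
        · exact Or.inr (Or.inr ⟨by omega, h2⟩)

theorem Ffun_GFset_le {D : Finset ℕ} (hD : 0 ∉ D) {j₀ : ℕ} (h1 : 1 ≤ j₀) (h2 : j₀ ∉ D)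
    {j : ℕ} (hj : j ≤ j₀) :
    Ffun (GFset D j₀) j ≤ j₀ + (D.filter (fun i => j₀ < i)).card := by
  have hsub : (GFset D j₀).filter (fun i => j < i)
      ⊆ (D.filter (fun i => j < i ∧ i < j₀)) ∪
        (insert j₀ ((D.filter (fun i => j₀ < i)).image (· + 1))) := by
    intro t ht
    have ht2 := Finset.mem_filter.mp ht
    rcases mem_GFset.mp ht2.1 with ⟨ha, hb⟩ | ⟨ha, hb⟩ | ⟨ha, hb⟩
    · exact Finset.mem_union_left _ (Finset.mem_filter.mpr ⟨ha, ht2.2, hb⟩)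
    · exact Finset.mem_union_right _ (Finset.mem_insert.mpr (Or.inl ha))
    · refine Finset.mem_union_right _ (Finset.mem_insert.mpr (Or.inr ?_))
      exact Finset.mem_image.mpr ⟨t - 1, Finset.mem_filter.mpr ⟨hb, by omega⟩, by omega⟩
  have hcard := Finset.card_le_card hsub
  have hu1 := Finset.card_union_le (D.filter (fun i => j < i ∧ i < j₀))
    (insert j₀ ((D.filter (fun i => j₀ < i)).image (· + 1)))
  have hu2 := Finset.card_insert_le j₀ ((D.filter (fun i => j₀ < i)).image (· + 1))
  have hu3 := Finset.card_image_le (s := D.filter (fun i => j₀ < i)) (f := (· + 1))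
  have hbet := card_filter_between D j j₀
  have hj0mem : j₀ ∈ GFset D j₀ := mem_GFset.mpr (Or.inr (Or.inl ⟨rfl, h1⟩))
  unfold Ffun
  by_cases hcond : j = 0 ∨ j ∈ GFset D j₀
  · rw [if_pos hcond]; omega
  · rw [if_neg hcond]
    have hne : j ≠ j₀ := fun he => hcond (Or.inr (he ▸ hj0mem))
    omega

theorem permword_length {n : ℕ} {v : List ℕ} (h : IsPermWord n v) : v.length = n := by
  rw [h.length_eq, List.length_range']

theorem permword_mem {n : ℕ} {v : List ℕ} (h : IsPermWord n v) {x : ℕ} (hx : x ∈ v) :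
    1 ≤ x ∧ x ≤ n := by
  have h2 := h.mem_iff.mp hx
  rw [List.mem_range'_1] at h2
  omega

theorem permword_mem' {n : ℕ} {v : List ℕ} (h : IsPermWord n v) {x : ℕ}
    (h1 : 1 ≤ x) (h2 : x ≤ n) : x ∈ v := by
  rw [h.mem_iff, List.mem_range'_1]
  omega

theorem permword_nodup {n : ℕ} {v : List ℕ} (h : IsPermWord n v) : v.Nodup :=
  h.nodup_iff.mpr List.nodup_range'

theorem permword_count {n : ℕ} {v : List ℕ} (h : IsPermWord n v) {x : ℕ}
    (h1 : 1 ≤ x) (h2 : x ≤ n) : v.count x = 1 :=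
  List.count_eq_one_of_mem (permword_nodup h) (permword_mem' h h1 h2)

theorem range'_filter_length (m : ℕ) (hm : 1 ≤ m) :
    ∀ N : ℕ, ((List.range' 1 N).filter (fun x => m ≤ x)).length = N + 1 - m := by
  intro N
  induction N with
  | zero => simp; omega
  | succ N ih =>
    rw [List.range'_concat, List.filter_append, List.length_append, ih]
    simp only [one_mul]
    by_cases h : m ≤ 1 + N
    · have h3 : (List.filter (fun x => decide (m ≤ x)) [1 + N]).length = 1 := by
        simp [h]
      rw [h3]; omega
    · have h3 : (List.filter (fun x => decide (m ≤ x)) [1 + N]).length = 0 := by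
        simp; omega
      rw [h3]; omega

theorem permword_filter_length {n : ℕ} {v : List ℕ} (h : IsPermWord n v) {m : ℕ}
    (hm : 1 ≤ m) : (v.filter (fun x => m ≤ x)).length = n + 1 - m := by
  rw [(h.filter _).length_eq, range'_filter_length m hm]

theorem filter_step {v : List ℕ} (m : ℕ) :
    (v.filter (fun x => m ≤ x)).filter (fun x => m + 1 ≤ x)
      = v.filter (fun x => m + 1 ≤ x) := by
  rw [List.filter_filter]
  apply List.filter_congr
  intro x _
  by_cases h : m + 1 ≤ x
  · have h2 : m ≤ x := by omega
    simp [h, h2]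
  · simp [h]

theorem exists_ins_step {v : List ℕ} {m : ℕ} (hall : ∀ x ∈ v, m ≤ x)
    (hcount : v.count m = 1) :
    ∃ s ≤ (v.filter (fun x => m + 1 ≤ x)).length,
      v = ins m (v.filter (fun x => m + 1 ≤ x)) s := by
  have hm : m ∈ v := by
    rw [← List.count_pos_iff, hcount]; omega
  obtain ⟨A, B, rfl⟩ := List.append_of_mem hm
  have hcnt2 : A.count m + (B.count m + 1) = 1 := by
    rw [List.count_append, List.count_cons] at hcount
    simpa using hcount
  have hmA : m ∉ A := by
    rw [← List.count_eq_zero]; omega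
  have hmB : m ∉ B := by
    rw [← List.count_eq_zero]; omega
  have hfA : A.filter (fun x => m + 1 ≤ x) = A := by
    apply List.filter_eq_self.mpr
    intro x hx
    have h1 := hall x (by simp [hx])
    have h2 : x ≠ m := fun he => hmA (he ▸ hx)
    simp; omega
  have hfB : B.filter (fun x => m + 1 ≤ x) = B := by
    apply List.filter_eq_self.mpr
    intro x hx
    have h1 := hall x (by simp [hx])
    have h2 : x ≠ m := fun he => hmB (he ▸ hx)
    simp; omega
  have hfilt : (A ++ m :: B).filter (fun x => m + 1 ≤ x) = A ++ B := by
    rw [List.filter_append, List.filter_cons]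
    have : (decide (m + 1 ≤ m)) = false := by simp
    rw [this, hfA, hfB]
    simp
  refine ⟨A.length, ?_, ?_⟩
  · rw [hfilt, List.length_append]; omega
  · rw [hfilt, ins, List.take_left, List.drop_left]

theorem mc_getD {n : ℕ} {v : List ℕ} (hlen : v.length = n) {m : ℕ} (hm : 1 ≤ m)
    (hmn : m ≤ n) :
    (mc v).getD (m - 1) 0
      = maj (v.filter (fun x => m ≤ x)) - maj (v.filter (fun x => m + 1 ≤ x)) := by
  unfold mc
  rw [List.getD_eq_getElem?_getD, List.getElem?_map, List.getElem?_range (by omega)]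
  simp only [Option.map_some, Option.getD_some]
  rw [show m - 1 + 1 = m by omega, show m - 1 + 2 = m + 1 by omega]

theorem chain_incr {n : ℕ} {v : List ℕ} (hperm : IsPermWord n v) {m : ℕ} (hm : 1 ≤ m)
    (hmn : m ≤ n) :
    ∃ s ≤ (v.filter (fun x => m + 1 ≤ x)).length,
      v.filter (fun x => m ≤ x) = ins m (v.filter (fun x => m + 1 ≤ x)) s ∧
      (mc v).getD (m - 1) 0 = Ffun (ligne (v.filter (fun x => m + 1 ≤ x))) s := by
  have hall : ∀ x ∈ v.filter (fun x => m ≤ x), m ≤ x := by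
    intro x hx
    have := List.mem_filter.mp hx
    simpa using this.2
  have hcount : (v.filter (fun x => m ≤ x)).count m = 1 := by
    rw [List.count_filter (by simp)]
    exact permword_count hperm hm hmn
  obtain ⟨s, hs, heq⟩ := exists_ins_step hall hcount
  rw [filter_step] at hs heq
  have hgt : ∀ x ∈ v.filter (fun x => m + 1 ≤ x), m < x := by
    intro x hx
    have := List.mem_filter.mp hx
    have := this.2
    simp at this
    omega
  have hmaj : maj (v.filter (fun x => m ≤ x))
      = maj (v.filter (fun x => m + 1 ≤ x)) + Ffun (ligne (v.filter (fun x => m + 1 ≤ x))) s := by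
    rw [heq, maj_ins_min hs hgt]
  refine ⟨s, hs, heq, ?_⟩
  rw [mc_getD (permword_length hperm) hm hmn, hmaj, Nat.add_sub_cancel_left]

theorem getD_mem {l : List ℕ} {t : ℕ} (h : t < l.length) : l.getD t 0 ∈ l := by
  rw [List.getD_eq_getElem _ _ h]; exact List.getElem_mem h

theorem getD_append_left {X S : List ℕ} {t : ℕ} (ht : t < X.length) :
    (X ++ S).getD t 0 = X.getD t 0 := by
  rw [List.getD_eq_getElem?_getD, List.getElem?_append, if_pos ht, ← List.getD_eq_getElem?_getD]

theorem getD_append_right {X S : List ℕ} {t : ℕ} (ht : X.length ≤ t) :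
    (X ++ S).getD t 0 = S.getD (t - X.length) 0 := by
  rw [List.getD_eq_getElem?_getD, List.getElem?_append_right ht, ← List.getD_eq_getElem?_getD]

theorem ins_append {a : ℕ} {A B : List ℕ} {j : ℕ} (hj : j ≤ A.length) :
    ins a A j ++ B = ins a (A ++ B) j := by
  unfold ins
  rw [List.take_append, List.drop_append]
  rw [show j - A.length = 0 by omega]
  simp

theorem filter_PS {P S : List ℕ} {k m : ℕ} (hm : m ≤ k) (hS : ∀ x ∈ S, k < x) :
    (P ++ k :: S).filter (fun x => m ≤ x) = P.filter (fun x => m ≤ x) ++ k :: S := by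
  rw [List.filter_append, List.filter_cons]
  have h1 : (decide (m ≤ k)) = true := by simp; omega
  rw [h1]
  simp only [if_true]
  congr 2
  apply List.filter_eq_self.mpr
  intro x hx
  have := hS x hx
  simp; omega

theorem filter_PS' {P S : List ℕ} {k : ℕ} (hS : ∀ x ∈ S, k < x) :
    (P ++ k :: S).filter (fun x => k + 1 ≤ x) = P.filter (fun x => k + 1 ≤ x) ++ S := by
  rw [List.filter_append, List.filter_cons]
  have h1 : (decide (k + 1 ≤ k)) = false := by simp
  rw [h1]
  simp only [if_false, Bool.false_eq_true]
  congr 1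
  apply List.filter_eq_self.mpr
  intro x hx
  have := hS x hx
  simp; omega

theorem ligne_PS {X S : List ℕ} {k : ℕ} (hS : ∀ x ∈ S, k < x)
    (hmem : 1 ≤ X.length → k < (X ++ S).getD (X.length - 1) 0 → X.length ∈ ligne (X ++ S)) :
    ligne (X ++ k :: S) = DSset (ligne (X ++ S)) X.length := by
  have hX : X ++ k :: S = ins k (X ++ S) X.length := by
    rw [ins, List.take_left, List.drop_left]
  rw [hX]
  apply ligne_ins_ds (by rw [List.length_append]; omega)
  · intro x hx
    rw [List.drop_left] at hx
    exact hS x hx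
  · exact hmem

theorem maj_PS {X S : List ℕ} {k : ℕ} (hS : ∀ x ∈ S, k < x)
    (hmem : 1 ≤ X.length → k < (X ++ S).getD (X.length - 1) 0 → X.length ∈ ligne (X ++ S)) :
    maj (X ++ k :: S) = maj (X ++ S) + ((ligne (X ++ S)).filter (fun i => X.length < i)).card := by
  have hX : X ++ k :: S = ins k (X ++ S) X.length := by
    rw [ins, List.take_left, List.drop_left]
  rw [hX]
  apply maj_ins_ds (by rw [List.length_append]; omega)
  · intro x hx
    rw [List.drop_left] at hx
    exact hS x hx
  · exact hmem

theorem mem_ligne_append_high {X S : List ℕ} {i : ℕ} (hi : X.length < i) :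
    i ∈ ligne (X ++ S) ↔ i - X.length ∈ ligne S := by
  rw [mem_ligne, mem_ligne, getD_append_right (by omega : X.length ≤ i),
    getD_append_right (by omega : X.length ≤ i - 1), List.length_append,
    show i - 1 - X.length = i - X.length - 1 by omega]
  omega

theorem card_ligne_high (X S : List ℕ) :
    ((ligne (X ++ S)).filter (fun i => X.length < i)).card = (ligne S).card := by
  apply Finset.card_bij (fun i _ => i - X.length)
  · intro i hi
    have h2 := Finset.mem_filter.mp hi
    exact (mem_ligne_append_high h2.2).mp h2.1
  · intro i hi i' hi' heq
    have h2 := Finset.mem_filter.mp hi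
    have h3 := Finset.mem_filter.mp hi'
    omega
  · intro b hb
    have hb1 := mem_ligne.mp hb
    refine ⟨b + X.length, Finset.mem_filter.mpr ⟨?_, by omega⟩, by omega⟩
    rw [mem_ligne_append_high (by omega)]
    rw [show b + X.length - X.length = b by omega]
    exact hb

theorem exists_last_split {P : List ℕ} {k : ℕ} (h : ∃ x ∈ P, k < x) :
    ∃ Q x₀ R, P = Q ++ x₀ :: R ∧ k < x₀ ∧ ∀ x ∈ R, ¬ k < x := by
  induction P using List.reverseRecOn with
  | nil => simp at h
  | append_singleton P' a ih =>
    by_cases ha : k < a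
    · exact ⟨P', a, [], by simp, ha, by simp⟩
    · have h' : ∃ x ∈ P', k < x := by
        obtain ⟨x, hx, hxk⟩ := h
        rcases List.mem_append.mp hx with h1 | h1
        · exact ⟨x, h1, hxk⟩
        · simp at h1
          subst h1
          exact absurd hxk ha
      obtain ⟨Q, x₀, R, hPeq, hx₀, hR⟩ := ih h'
      refine ⟨Q, x₀, R ++ [a], by rw [hPeq]; simp, hx₀, ?_⟩
      intro x hx
      rcases List.mem_append.mp hx with h1 | h1
      · exact hR x h1
      · simp at h1
        subst h1
        exact ha

theorem sigma_step {P : List ℕ} {m : ℕ} (hm2 : 2 ≤ m) (hndP : P.Nodup)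
    (hmem : m - 1 ∈ P) :
    ∃ β ≤ (P.filter (fun x => m ≤ x)).length,
      P.filter (fun x => m - 1 ≤ x) = ins (m-1) (P.filter (fun x => m ≤ x)) β := by
  obtain ⟨P₁, P₂, hPeq⟩ := List.append_of_mem hmem
  subst hPeq
  obtain ⟨hnd1, hnd2, hdisj⟩ := List.nodup_append'.mp hndP
  have hm1 : m - 1 ∉ P₁ := fun h => hdisj h List.mem_cons_self
  have hm2' : m - 1 ∉ P₂ := (List.nodup_cons.mp hnd2).1
  have hf1 : P₁.filter (fun x => m - 1 ≤ x) = P₁.filter (fun x => m ≤ x) := by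
    apply List.filter_congr
    intro x hx
    have hne : x ≠ m - 1 := fun he => hm1 (he ▸ hx)
    by_cases h : m ≤ x
    · have h2 : m - 1 ≤ x := by omega
      simp [h, h2]
    · have h2 : ¬ (m - 1 ≤ x) := by omega
      simp [h, h2]
  have hf2 : P₂.filter (fun x => m - 1 ≤ x) = P₂.filter (fun x => m ≤ x) := by
    apply List.filter_congr
    intro x hx
    have hne : x ≠ m - 1 := fun he => hm2' (he ▸ hx)
    by_cases h : m ≤ x
    · have h2 : m - 1 ≤ x := by omega
      simp [h, h2]
    · have h2 : ¬ (m - 1 ≤ x) := by omega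
      simp [h, h2]
  have he1 : (P₁ ++ (m-1) :: P₂).filter (fun x => m - 1 ≤ x)
      = P₁.filter (fun x => m ≤ x) ++ (m-1) :: P₂.filter (fun x => m ≤ x) := by
    rw [List.filter_append, List.filter_cons]
    have : (decide (m - 1 ≤ m - 1)) = true := by simp
    rw [this]
    simp only [if_true]
    rw [hf1, hf2]
  have he2 : (P₁ ++ (m-1) :: P₂).filter (fun x => m ≤ x)
      = P₁.filter (fun x => m ≤ x) ++ P₂.filter (fun x => m ≤ x) := by
    rw [List.filter_append, List.filter_cons]
    have : (decide (m ≤ m - 1)) = false := by simp; omega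
    rw [this]
    simp only [if_false, Bool.false_eq_true]
  refine ⟨(P₁.filter (fun x => m ≤ x)).length, ?_, ?_⟩
  · rw [he2, List.length_append]; omega
  · rw [he1, he2, ins, List.take_left, List.drop_left]

theorem getD_last {A : List ℕ} {x : ℕ} : (A ++ [x]).getD A.length 0 = x := by
  rw [getD_append_right le_rfl, Nat.sub_self]
  rfl

theorem hmem_of_dich {P S : List ℕ} {k m : ℕ} (hm : m ≤ k) (hS : ∀ x ∈ S, k < x)
    (hd : (∀ x ∈ P, x < k) ∨ (∃ Q x₀ R, P = Q ++ x₀ :: R ∧ k < x₀ ∧ (∀ x ∈ R, x < k) ∧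
      ∃ y S', S = y :: S' ∧ y < x₀)) :
    1 ≤ (P.filter (fun x => m ≤ x)).length →
    k < ((P.filter (fun x => m ≤ x)) ++ S).getD ((P.filter (fun x => m ≤ x)).length - 1) 0 →
    (P.filter (fun x => m ≤ x)).length ∈ ligne ((P.filter (fun x => m ≤ x)) ++ S) := by
  intro h1 h2
  set X := P.filter (fun x => m ≤ x) with hXdef
  rcases hd with hA | ⟨Q, x₀, R, hPeq, hx₀, hR, y, S', hSeq, hyx⟩
  · exfalso
    rw [getD_append_left (by omega)] at h2
    have h4 : X.getD (X.length - 1) 0 ∈ X := getD_mem (by omega)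
    have h5 := (List.mem_filter.mp h4).1
    have := hA _ h5
    omega
  · have hXeq : X = Q.filter (fun x => m ≤ x) ++ x₀ :: R.filter (fun x => m ≤ x) := by
      rw [hXdef, hPeq, List.filter_append, List.filter_cons]
      have hdec : decide (m ≤ x₀) = true := by simp; omega
      rw [hdec]
      simp only [if_true]
    by_cases hRf : R.filter (fun x => m ≤ x) = []
    · have hXeq2 : X = Q.filter (fun x => m ≤ x) ++ [x₀] := by rw [hXeq, hRf]
      have hlenX : X.length = (Q.filter (fun x => m ≤ x)).length + 1 := by
        rw [hXeq2]
        simp only [List.length_append, List.length_cons, List.length_nil]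
      subst hSeq
      rw [mem_ligne]
      refine ⟨by omega, by rw [List.length_append, List.length_cons]; omega, ?_⟩
      have hg1 : (X ++ y :: S').getD X.length 0 = y := by
        rw [getD_append_right le_rfl, Nat.sub_self]
        rfl
      have hg2 : (X ++ y :: S').getD (X.length - 1) 0 = x₀ := by
        rw [getD_append_left (by omega),
          show X.length - 1 = (Q.filter (fun x => m ≤ x)).length by omega,
          hXeq2, getD_last]
      rw [hg1, hg2]
      exact hyx
    · exfalso
      have hXeq3 : X = (Q.filter (fun x => m ≤ x) ++ [x₀]) ++ R.filter (fun x => m ≤ x) := by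
        rw [hXeq]; simp
    
      have hlenR : 1 ≤ (R.filter (fun x => m ≤ x)).length := by
        rcases Nat.eq_zero_or_pos (R.filter (fun x => m ≤ x)).length with h | h
        · exact absurd (List.length_eq_zero_iff.mp h) hRf
        · exact h
      have hlenX : X.length = (Q.filter (fun x => m ≤ x)).length + 1
          + (R.filter (fun x => m ≤ x)).length := by
        rw [hXeq3]
        simp only [List.length_append, List.length_cons, List.length_nil]
      rw [getD_append_left (by omega)] at h2
      have hidx : X.length - 1 = (Q.filter (fun x => m ≤ x) ++ [x₀]).length
          + ((R.filter (fun x => m ≤ x)).length - 1) := by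
        simp only [List.length_append, List.length_cons, List.length_nil]
        omega
      rw [hidx, hXeq3, getD_append_right (Nat.le_add_right _ _), Nat.add_sub_cancel_left] at h2
      have h4 : (R.filter (fun x => m ≤ x)).getD ((R.filter (fun x => m ≤ x)).length - 1) 0
          ∈ R.filter (fun x => m ≤ x) := getD_mem (by omega)
      have h5 := hR _ (List.mem_filter.mp h4).1
      omega

theorem sigma_step_full {P S : List ℕ} {k M : ℕ} (hM2 : 2 ≤ M) (hMk : M ≤ k)
    (hS : ∀ x ∈ S, k < x) (hndP : P.Nodup) (hMP : M - 1 ∈ P) :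
    ∃ β ≤ (P.filter (fun x => M ≤ x)).length,
      (P ++ k :: S).filter (fun x => M - 1 ≤ x)
        = ins (M-1) ((P ++ k :: S).filter (fun x => M ≤ x)) β ∧
      P.filter (fun x => M - 1 ≤ x) ++ S = ins (M-1) (P.filter (fun x => M ≤ x) ++ S) β ∧
      maj ((P ++ k :: S).filter (fun x => M - 1 ≤ x))
        = maj ((P ++ k :: S).filter (fun x => M ≤ x))
          + Ffun (ligne ((P ++ k :: S).filter (fun x => M ≤ x))) β := by
  obtain ⟨β, hβ, heq⟩ := sigma_step hM2 hndP hMP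
  have hW : (P ++ k :: S).filter (fun x => M - 1 ≤ x)
      = ins (M-1) ((P ++ k :: S).filter (fun x => M ≤ x)) β := by
    rw [filter_PS (by omega) hS, filter_PS (by omega) hS, heq, ins_append hβ]
  have hβ2 : β ≤ ((P ++ k :: S).filter (fun x => M ≤ x)).length := by
    rw [filter_PS (by omega) hS, List.length_append]
    omega
  have hgt : ∀ x ∈ (P ++ k :: S).filter (fun x => M ≤ x), M - 1 < x := by
    intro x hx
    have := (List.mem_filter.mp hx).2
    simp at this
    omega
  exact ⟨β, hβ, hW, by rw [heq, ins_append hβ], by rw [hW, maj_ins_min hβ2 hgt]⟩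

theorem dich_case_B {P S Q R : List ℕ} {k x₀ : ℕ}
    (hk2 : 2 ≤ k)
    (hS : ∀ x ∈ S, k < x)
    (hPeq : P = Q ++ x₀ :: R) (hx₀ : k < x₀) (hR : ∀ x ∈ R, x < k)
    (hndP : P.Nodup) (hk1P : k - 1 ∈ P) (hkP : k ∉ P)
    (hC2 : maj ((P ++ k :: S).filter (fun x => k ≤ x))
        - maj ((P ++ k :: S).filter (fun x => k + 1 ≤ x))
      < maj ((P ++ k :: S).filter (fun x => k - 1 ≤ x))
        - maj ((P ++ k :: S).filter (fun x => k ≤ x))) :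
    ∃ y S', S = y :: S' ∧ y < x₀ := by
  by_contra hny
  have hPk : P.filter (fun x => k ≤ x) = P.filter (fun x => k + 1 ≤ x) := by
    apply List.filter_congr
    intro x hx
    have hxk : x ≠ k := fun he => hkP (he ▸ hx)
    by_cases h : k + 1 ≤ x
    · have h2 : k ≤ x := by omega
      simp [h, h2]
    · by_cases h2 : k ≤ x
      · omega
      · simp [h, h2]
  have hRf : R.filter (fun x => k + 1 ≤ x) = [] := by
    apply List.filter_eq_nil_iff.mpr
    intro a ha
    have := hR a ha
    simp
    omega
  have hPfeq : P.filter (fun x => k + 1 ≤ x) = Q.filter (fun x => k + 1 ≤ x) ++ [x₀] := by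
    rw [hPeq, List.filter_append, List.filter_cons,
      show decide (k + 1 ≤ x₀) = true by simp; omega]
    simp only [if_true]
    rw [hRf]
  have hj₀1 : 1 ≤ (P.filter (fun x => k + 1 ≤ x)).length := by
    rw [hPfeq, List.length_append]
    simp
  have hwall : ∀ x ∈ P.filter (fun x => k + 1 ≤ x) ++ S, k < x := by
    intro x hx
    rcases List.mem_append.mp hx with h | h
    · have := (List.mem_filter.mp h).2
      simp at this
      omega
    · exact hS x h
  have hj₀w : (P.filter (fun x => k + 1 ≤ x)).length
      ≤ (P.filter (fun x => k + 1 ≤ x) ++ S).length := by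
    rw [List.length_append]; omega
  have hWkins : (P ++ k :: S).filter (fun x => k ≤ x)
      = ins k (P.filter (fun x => k + 1 ≤ x) ++ S) (P.filter (fun x => k + 1 ≤ x)).length := by
    rw [filter_PS le_rfl hS, hPk, ins, List.take_left, List.drop_left]
  -- d_k value
  have hdk : maj ((P ++ k :: S).filter (fun x => k ≤ x))
      - maj ((P ++ k :: S).filter (fun x => k + 1 ≤ x))
      = Ffun (ligne (P.filter (fun x => k + 1 ≤ x) ++ S)) (P.filter (fun x => k + 1 ≤ x)).length := by
    rw [hWkins, filter_PS' hS, maj_ins_min hj₀w hwall, Nat.add_sub_cancel_left]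
  -- j₀ not a descent of w
  have hj₀not : (P.filter (fun x => k + 1 ≤ x)).length
      ∉ ligne (P.filter (fun x => k + 1 ≤ x) ++ S) := by
    intro hmem
    obtain ⟨hh1, hh2, hh3⟩ := mem_ligne.mp hmem
    rw [List.length_append] at hh2
    have hSne : S ≠ [] := by
      intro he
      rw [he] at hh2
      simp at hh2
    obtain ⟨y, S', hSeq⟩ := List.exists_cons_of_ne_nil hSne
    have hgy : (P.filter (fun x => k + 1 ≤ x) ++ S).getD (P.filter (fun x => k + 1 ≤ x)).length 0
        = y := by
      rw [getD_append_right le_rfl, Nat.sub_self, hSeq]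
      rfl
    have hgx : (P.filter (fun x => k + 1 ≤ x) ++ S).getD ((P.filter (fun x => k + 1 ≤ x)).length - 1) 0
        = x₀ := by
      rw [getD_append_left (by omega),
        show (P.filter (fun x => k + 1 ≤ x)).length - 1 = (Q.filter (fun x => k + 1 ≤ x)).length by
          rw [hPfeq, List.length_append]; simp,
        hPfeq, getD_last]
    rw [hgy, hgx] at hh3
    exact hny ⟨y, S', hSeq, hh3⟩
  have hdkval : maj ((P ++ k :: S).filter (fun x => k ≤ x))
      - maj ((P ++ k :: S).filter (fun x => k + 1 ≤ x))
      = (P.filter (fun x => k + 1 ≤ x)).length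
        + ((ligne (P.filter (fun x => k + 1 ≤ x) ++ S)).filter
            (fun i => (P.filter (fun x => k + 1 ≤ x)).length < i)).card := by
    rw [hdk, Ffun, if_neg (by push_neg; exact ⟨by omega, hj₀not⟩)]
  -- the (k-1)-step
  obtain ⟨β, hβle, hWeq, _, hmajeq⟩ := sigma_step_full (M := k) hk2 le_rfl hS hndP hk1P
  have hd2 : maj ((P ++ k :: S).filter (fun x => k - 1 ≤ x))
      - maj ((P ++ k :: S).filter (fun x => k ≤ x))
      = Ffun (ligne ((P ++ k :: S).filter (fun x => k ≤ x))) β := by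
    rw [hmajeq, Nat.add_sub_cancel_left]
  have hligWk : ligne ((P ++ k :: S).filter (fun x => k ≤ x))
      = GFset (ligne (P.filter (fun x => k + 1 ≤ x) ++ S)) (P.filter (fun x => k + 1 ≤ x)).length := by
    rw [hWkins]
    exact ligne_ins_min hj₀w hwall
  have hβj₀ : β ≤ (P.filter (fun x => k + 1 ≤ x)).length := by
    rw [← hPk]
    exact hβle
  have hbound := Ffun_GFset_le (zero_not_mem_ligne
      (w := P.filter (fun x => k + 1 ≤ x) ++ S)) hj₀1 hj₀not hβj₀
  rw [hd2, hligWk] at hC2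
  rw [hdkval] at hC2
  omega

theorem getD_take {l : List ℕ} {t m : ℕ} (h : t < m) :
    (l.take m).getD t 0 = l.getD t 0 := by
  rw [List.getD_eq_getElem?_getD, List.getElem?_take, if_pos h, ← List.getD_eq_getElem?_getD]

theorem getD_drop {l : List ℕ} {t m : ℕ} :
    (l.drop m).getD t 0 = l.getD (m + t) 0 := by
  rw [List.getD_eq_getElem?_getD, List.getElem?_drop, ← List.getD_eq_getElem?_getD]

theorem getD_cons {a : ℕ} {l : List ℕ} {t : ℕ} (h : 1 ≤ t) :
    (a :: l).getD t 0 = l.getD (t - 1) 0 := by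
  have h2 := List.getD_cons_succ (x := a) (xs := l) (n := t - 1) (d := 0)
  rw [show t - 1 + 1 = t by omega] at h2
  exact h2
end Stmt13

open Stmt13 in
theorem stmt13 (n : ℕ) (σ : List ℕ) (hσ : IsPermWord n σ) (k : ℕ)
    (hk1 : 1 ≤ k) (hkn : k ≤ n)
    (C1 : ∀ i j : ℕ, i ≤ j → j < k - 1 → (mc σ).getD i 0 ≤ (mc σ).getD j 0)
    (C2 : (mc σ).getD (k - 2) 0 > (mc σ).getD (k - 1) 0)
    (C3 : (mc σ).getD (k - 1) 0 ≤ (mc σ).getD 0 0)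
    (C4 : ∀ i : ℕ, 1 ≤ i → i < k → σ.idxOf i < σ.idxOf k) :
    ∀ τ : List ℕ, IsPermWord n τ →
      mc τ = (mc σ).getD (k - 1) 0 :: ((mc σ).take (k - 1) ++ (mc σ).drop k) →
      ligne σ = ligne τ := by
  intro τ hτ hmcτ
  rcases Nat.lt_or_ge k 2 with hklt | hk2'
  · have hkk : k = 1 := by omega
    subst hkk
    exact absurd C2 (lt_irrefl _)
  have hlenσ : σ.length = n := permword_length hσ
  have hlenτ : τ.length = n := permword_length hτ
  have hlmc : (mc σ).length = n := by
    unfold mc; rw [List.length_map, List.length_range, hlenσ]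
  have hkmem : k ∈ σ := permword_mem' hσ hk1 hkn
  obtain ⟨P, S, hσeq⟩ := List.append_of_mem hkmem
  subst hσeq
  have hnd := permword_nodup hσ
  obtain ⟨hndP, hndkS, hdisj⟩ := List.nodup_append'.mp hnd
  have hkS : k ∉ S := (List.nodup_cons.mp hndkS).1
  have hkP : k ∉ P := fun h => hdisj h List.mem_cons_self
  -- S letters > k  (uses C4)
  have hS : ∀ x ∈ S, k < x := by
    intro x hxS
    have hxmem : x ∈ P ++ k :: S := by simp [hxS]
    have hx := permword_mem hσ hxmem
    have hxk : x ≠ k := fun he => hkS (he ▸ hxS)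
    by_contra hle
    push_neg at hle
    have hxP : x ∉ P := fun h => hdisj h (by simp [hxS])
    have hidxk : (P ++ k :: S).idxOf k = P.length := by
      rw [List.idxOf_append_of_notMem hkP]
      simp
    have hidxx : (P ++ k :: S).idxOf x = P.length + (k :: S).idxOf x :=
      List.idxOf_append_of_notMem hxP
    have hC := C4 x (by omega) (by omega)
    rw [hidxk, hidxx] at hC
    omega
  have hPsmall : ∀ x, 1 ≤ x → x < k → x ∈ P := by
    intro x h1 h2
    have hmem : x ∈ P ++ k :: S := permword_mem' hσ h1 (by omega)
    rcases List.mem_append.mp hmem with h | h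
    · exact h
    · rcases List.mem_cons.mp h with h | h
      · omega
      · have := hS x h; omega
  have hPk : P.filter (fun x => k ≤ x) = P.filter (fun x => k + 1 ≤ x) := by
    apply List.filter_congr
    intro x hx
    have hxk : x ≠ k := fun he => hkP (he ▸ hx)
    by_cases h : k + 1 ≤ x
    · have h2 : k ≤ x := by omega
      simp [h, h2]
    · by_cases h2 : k ≤ x
      · omega
      · simp [h, h2]
  -- dichotomy
  have hdich : (∀ x ∈ P, x < k) ∨ (∃ Q x₀ R, P = Q ++ x₀ :: R ∧ k < x₀ ∧ (∀ x ∈ R, x < k) ∧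
      ∃ y S', S = y :: S' ∧ y < x₀) := by
    by_cases hA : ∀ x ∈ P, x < k
    · exact Or.inl hA
    · right
      push_neg at hA
      obtain ⟨x, hxP, hxk⟩ := hA
      have hxk' : k < x := by
        have hne : x ≠ k := fun he => hkP (he ▸ hxP)
        omega
      obtain ⟨Q, x₀, R, hPeq, hx₀, hR0⟩ := exists_last_split ⟨x, hxP, hxk'⟩
      have hR : ∀ z ∈ R, z < k := by
        intro z hz
        have hzP : z ∈ P := by rw [hPeq]; simp [hz]
        have hne : z ≠ k := fun he => hkP (he ▸ hzP)
        have := hR0 z hz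
        omega
      refine ⟨Q, x₀, R, hPeq, hx₀, hR, ?_⟩
      apply dich_case_B hk2' hS hPeq hx₀ hR hndP (hPsmall (k-1) (by omega) (by omega)) hkP
      have e1 := mc_getD hlenσ hk1 hkn
      have e2 := mc_getD hlenσ (m := k - 1) (by omega) (by omega)
      rw [show k - 1 - 1 = k - 2 by omega, show k - 1 + 1 = k by omega] at e2
      rw [← e1, ← e2]
      exact C2
  -- code agreement lemmas
  have hτcode0 : (mc τ).getD 0 0 = (mc (P ++ k :: S)).getD (k - 1) 0 := by
    rw [hmcτ, List.getD_cons_zero]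
  have hlentake : ((mc (P ++ k :: S)).take (k-1)).length = k - 1 := by
    rw [List.length_take, hlmc]; omega
  have hτcode2 : ∀ M, 1 ≤ M → M ≤ k - 1 →
      (mc τ).getD M 0 = (mc (P ++ k :: S)).getD (M - 1) 0 := by
    intro M h1 h2
    rw [hmcτ, getD_cons (by omega), getD_append_left (by rw [hlentake]; omega),
      getD_take (by omega)]
  have hτcodehigh : ∀ M, k + 1 ≤ M →
      (mc τ).getD (M - 1) 0 = (mc (P ++ k :: S)).getD (M - 1) 0 := by
    intro M h1
    rw [hmcτ, getD_cons (by omega), getD_append_right (by rw [hlentake]; omega),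
      hlentake, getD_drop]
    congr 1
    omega
  -- phase 1
  have phase1 : ∀ j, ∀ M, k + 1 ≤ M → M ≤ n + 1 → n + 1 - M = j →
      τ.filter (fun x => M ≤ x) = (P ++ k :: S).filter (fun x => M ≤ x) := by
    intro j
    induction j with
    | zero =>
      intro M h1 h2 h3
      have hM : M = n + 1 := by omega
      subst hM
      have e1 : τ.filter (fun x => n + 1 ≤ x) = [] := by
        apply List.filter_eq_nil_iff.mpr
        intro a ha
        have := permword_mem hτ ha
        simp
        omega
      have e2 : (P ++ k :: S).filter (fun x => n + 1 ≤ x) = [] := by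
        apply List.filter_eq_nil_iff.mpr
        intro a ha
        have := permword_mem hσ ha
        simp
        omega
      rw [e1, e2]
    | succ j ih =>
      intro M h1 h2 h3
      have hMn : M ≤ n := by omega
      obtain ⟨s, hs, heqτ, hFτ⟩ := chain_incr hτ (show 1 ≤ M by omega) hMn
      obtain ⟨s', hs', heqσ, hFσ⟩ := chain_incr hσ (show 1 ≤ M by omega) hMn
      have hih := ih (M+1) (by omega) (by omega) (by omega)
      have hcode := hτcodehigh M h1
      rw [hih] at hFτ heqτ
      have hss : s = s' := by
        apply Ffun_inj zero_not_mem_ligne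
        rw [← hFτ, ← hFσ, hcode]
      rw [heqτ, heqσ, hss]
  -- phase 2
  have phase2 : ∀ j, ∀ M, 1 ≤ M → M ≤ k → k - M = j →
      ligne (τ.filter (fun x => M + 1 ≤ x)) = ligne (P.filter (fun x => M ≤ x) ++ S) := by
    intro j
    induction j with
    | zero =>
      intro M h1 h2 h3
      have hM : M = k := by omega
      subst hM
      rw [phase1 (n - M) (M + 1) le_rfl (by omega) (by omega), filter_PS' hS, hPk]
    | succ j ih =>
      intro M h1 h2 h3
      have hMk : M + 1 ≤ k := by omega
      obtain ⟨s, hs, heqτ, hFτ⟩ := chain_incr hτ (show 1 ≤ M + 1 by omega) (by omega)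
      rw [show M + 1 - 1 = M by omega] at hFτ
      have hih := ih (M+1) (by omega) (by omega) (by omega)
      obtain ⟨β, hβle, hWeq, hueq, hmajeq⟩ := sigma_step_full (M := M+1) (by omega) hMk hS hndP
        (show M + 1 - 1 ∈ P by
          rw [Nat.add_sub_cancel]
          exact hPsmall M h1 (by omega))
      simp only [Nat.add_sub_cancel] at hWeq hueq hmajeq
      have hσd : (mc (P ++ k :: S)).getD (M - 1) 0
          = Ffun (ligne ((P ++ k :: S).filter (fun x => M + 1 ≤ x))) β := by
        rw [mc_getD hlenσ h1 (by omega), hmajeq, Nat.add_sub_cancel_left]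
      have hlig : ligne ((P ++ k :: S).filter (fun x => M + 1 ≤ x))
          = DSset (ligne (P.filter (fun x => M + 1 ≤ x) ++ S))
              (P.filter (fun x => M + 1 ≤ x)).length := by
        rw [filter_PS (by omega) hS]
        exact ligne_PS hS (hmem_of_dich (by omega) hS hdich)
      have hcode := hτcode2 M h1 (by omega)
      rw [hih] at hFτ
      have hFτ2 : Ffun (ligne (P.filter (fun x => M + 1 ≤ x) ++ S)) s
          = Ffun (ligne (P.filter (fun x => M + 1 ≤ x) ++ S)) β := by
        rw [← hFτ, hcode, hσd, hlig, Ffun_DSset hβle]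
      have hsβ : s = β := Ffun_inj zero_not_mem_ligne hFτ2
      have hτgt : ∀ x ∈ τ.filter (fun x => M + 1 + 1 ≤ x), M + 1 < x := by
        intro x hx
        have := (List.mem_filter.mp hx).2
        simp at this
        omega
      have hugt : ∀ x ∈ P.filter (fun x => M + 1 ≤ x) ++ S, M < x := by
        intro x hx
        rcases List.mem_append.mp hx with h | h
        · have := (List.mem_filter.mp h).2
          simp at this
          omega
        · have := hS x h
          omega
      have hβlen : β ≤ (P.filter (fun x => M + 1 ≤ x) ++ S).length := by
        rw [List.length_append]; omega
      rw [heqτ, ligne_ins_min hs hτgt, hih, hsβ, hueq, ligne_ins_min hβlen hugt]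
  -- final assembly
  have hph2 := phase2 (k - 1) 1 le_rfl (by omega) (by omega)
  have hPfull : P.filter (fun x => 1 ≤ x) = P := by
    apply List.filter_eq_self.mpr
    intro x hx
    have := permword_mem hσ (show x ∈ P ++ k :: S by simp [hx])
    simp
    omega
  rw [hPfull] at hph2
  obtain ⟨s₁, hs₁, heq₁, hF₁⟩ := chain_incr hτ le_rfl (show 1 ≤ n by omega)
  have hτfull : τ.filter (fun x => 1 ≤ x) = τ := by
    apply List.filter_eq_self.mpr
    intro x hx
    have := permword_mem hτ hx
    simp
    omega
  rw [hτfull] at heq₁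
  rw [show (1:ℕ) - 1 = 0 from rfl] at hF₁
  have hdkr : (mc (P ++ k :: S)).getD (k - 1) 0 = (ligne S).card := by
    rw [mc_getD hlenσ hk1 hkn]
    have hXmem := hmem_of_dich (m := k) le_rfl hS hdich
    rw [filter_PS le_rfl hS, filter_PS' hS, ← hPk, maj_PS hS hXmem,
      Nat.add_sub_cancel_left, card_ligne_high]
  have hsig : ligne (P ++ k :: S) = DSset (ligne (P ++ S)) P.length := by
    have hXmem := hmem_of_dich (m := 1) (by omega) hS hdich
    rw [hPfull] at hXmem
    exact ligne_PS hS hXmem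
  obtain ⟨sstar, hsd, hsq, hsF, hsG⟩ := exists_slot (zero_not_mem_ligne (w := P ++ S)) P.length
  have hcardPS : ((ligne (P ++ S)).filter (fun i => P.length < i)).card = (ligne S).card :=
    card_ligne_high P S
  rw [hph2] at hF₁
  have hs₁eq : s₁ = sstar := by
    apply Ffun_inj (zero_not_mem_ligne (w := P ++ S))
    rw [← hF₁, hτcode0, hdkr, hsF, hcardPS]
  have hτgt1 : ∀ x ∈ τ.filter (fun x => 1 + 1 ≤ x), 1 < x := by
    intro x hx
    have := (List.mem_filter.mp hx).2
    simp at this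
    omega
  rw [hsig, ← hsG, ← hs₁eq, ← hph2, ← ligne_ins_min hs₁ hτgt1, ← heq₁]
end
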